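/- Let G ⊆ ℝ^d be a closed set satisfying (R_λ^r): a closed ball of radius λ rolls freely in G and a closed ball of radius r rolls freely in cl(Gᶜ). Then for each boundary point x ∈ ∂G there exists a unit vector η(x) such that B_λ(x − λη(x)) ⊆ G and B_r(x + rη(x)) ⊆ cl(Gᶜ). -/

import Mathlib

/-- A ball of radius `ρ` rolls freely in `A`. -/
def RollsFreely {d : ℕ} (ρ : ℝ) (A : Set (EuclideanSpace ℝ (Fin d))) : Prop :=
  ∀ a ∈ frontier A, ∃ x, a ∈ Metric.closedBall x ρ ∧ Metric.closedBall x ρ ⊆ A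

/-- Under (R_λ^r), for each boundary point `x ∈ ∂G` there is a unit vector `η`
with `B_λ(x − λη) ⊆ G` and `B_r(x + rη) ⊆ cl(Gᶜ)`. -/
theorem exists_unit_normal {d : ℕ} {G : Set (EuclideanSpace ℝ (Fin d))}
    (hcl : IsClosed G) {l r : ℝ} (hl : 0 < l) (hr : 0 < r)
    (hroll₁ : RollsFreely l G) (hroll₂ : RollsFreely r (closure Gᶜ)) :
    ∀ x ∈ frontier G, ∃ η : EuclideanSpace ℝ (Fin d), ‖η‖ = 1 ∧
      Metric.ball (x - l • η) l ⊆ G ∧ Metric.ball (x + r • η) r ⊆ closure Gᶜ := by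
  intro x hx
  obtain ⟨y, hxy, hyG⟩ := hroll₁ x hx
  have hballG : Metric.ball y l ⊆ interior G :=
    interior_maximal (Metric.ball_subset_closedBall.trans hyG) Metric.isOpen_ball
  -- x ∈ frontier (closure Gᶜ)
  have hclosG : x ∈ closure (interior G) := by
    have : x ∈ closure (Metric.ball y l) := by
      rw [closure_ball y hl.ne']; exact hxy
    exact closure_mono hballG this
  have hx2 : x ∈ frontier (closure Gᶜ) := by
    rw [closure_compl, frontier_compl, frontier, interior_interior]
    exact ⟨hclosG, hx.2⟩
  obtain ⟨z, hxz, hzC⟩ := hroll₂ x hx2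
  have hballC : Metric.ball z r ⊆ (interior G)ᶜ := by
    intro p hp
    have := Metric.ball_subset_closedBall.trans hzC hp
    rw [closure_compl] at this
    exact this
  have hdisj : ∀ p, p ∈ Metric.ball y l → p ∈ Metric.ball z r → False := by
    intro p h1 h2
    exact hballC h2 (hballG h1)
  have hdxy : dist x y ≤ l := Metric.mem_closedBall.mp hxy
  have hdxz : dist x z ≤ r := Metric.mem_closedBall.mp hxz
  have hlr : (0:ℝ) < l + r := by linarith
  have hdle : dist y z ≤ l + r := by
    calc dist y z ≤ dist y x + dist x z := dist_triangle _ _ _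
    _ ≤ l + r := by rw [dist_comm y x]; linarith
  have hdge : l + r ≤ dist y z := by
    by_contra h
    push_neg at h
    set t : ℝ := l / (l + r) with ht
    have ht0 : 0 < t := div_pos hl hlr
    have ht1 : t < 1 := (div_lt_one hlr).mpr (by linarith)
    set p := y + t • (z - y) with hp
    apply hdisj p
    · rw [Metric.mem_ball, dist_eq_norm]
      have : p - y = t • (z - y) := by rw [hp]; abel
      rw [this, norm_smul, Real.norm_eq_abs, abs_of_pos ht0]
      have hnorm : ‖z - y‖ = dist y z := by rw [dist_comm, dist_eq_norm]
      rw [hnorm]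
      calc t * dist y z < t * (l + r) := by
            apply mul_lt_mul_of_pos_left h ht0
      _ = l := by rw [ht]; field_simp
    · rw [Metric.mem_ball, dist_eq_norm]
      have : p - z = (1 - t) • (y - z) := by
        rw [hp]
        have : (1 - t) • (y - z) = (y - z) - t • (y - z) := by
          rw [sub_smul, one_smul]
        rw [this, smul_sub, smul_sub]; abel
      rw [this, norm_smul, Real.norm_eq_abs, abs_of_pos (by linarith)]
      have hnorm : ‖y - z‖ = dist y z := (dist_eq_norm y z).symm
      rw [hnorm]
      calc (1 - t) * dist y z < (1 - t) * (l + r) := by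
            apply mul_lt_mul_of_pos_left h (by linarith)
      _ = r := by rw [ht]; field_simp; ring
  have hdyz : dist y z = l + r := le_antisymm hdle hdge
  have hxyl : dist x y = l := by
    have : dist y z ≤ dist y x + dist x z := dist_triangle _ _ _
    rw [dist_comm y x] at this
    linarith
  have hxzr : dist x z = r := by
    have : dist y z ≤ dist y x + dist x z := dist_triangle _ _ _
    rw [dist_comm y x] at this
    linarith
  have hseg : x ∈ segment ℝ y z := by
    rw [mem_segment_iff_wbtw, ← dist_add_dist_eq_iff, dist_comm y x, hxyl, hxzr, hdyz]
  obtain ⟨a, b, ha, hb, hab, hx_eq⟩ := hseg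
  have hxy_eq : x - y = b • (z - y) := by
    have : a = 1 - b := by linarith
    rw [← hx_eq, this, sub_smul, one_smul, smul_sub]
    abel
  have hzx_eq : z - x = a • (z - y) := by
    have : b = 1 - a := by linarith
    rw [← hx_eq, this, sub_smul, one_smul, smul_sub]
    abel
  have hnormzy : ‖z - y‖ = l + r := by
    rw [← hdyz, dist_comm, dist_eq_norm]
  have hbval : b = l / (l + r) := by
    have h1 : ‖x - y‖ = l := by rw [← hxyl, dist_eq_norm]
    rw [hxy_eq, norm_smul, Real.norm_eq_abs, abs_of_nonneg hb, hnormzy] at h1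
    field_simp
    linarith [h1]
  have haval : a = r / (l + r) := by
    have : a = 1 - b := by linarith
    rw [this, hbval]; field_simp; ring
  refine ⟨l⁻¹ • (x - y), ?_, ?_, ?_⟩
  · rw [norm_smul, Real.norm_eq_abs, abs_of_pos (inv_pos.mpr hl)]
    have : ‖x - y‖ = l := by rw [← hxyl, dist_eq_norm]
    rw [this]; field_simp
  · have hy : x - l • (l⁻¹ • (x - y)) = y := by
      rw [smul_smul, mul_inv_cancel₀ hl.ne', one_smul]; abel
    rw [hy]
    exact (Metric.ball_subset_closedBall.trans hyG)
  · have hz : x + r • (l⁻¹ • (x - y)) = z := by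
      rw [smul_smul, hxy_eq, smul_smul, hbval]
      have : r * l⁻¹ * (l / (l + r)) = r / (l + r) := by field_simp
      rw [this, ← haval, ← hzx_eq]; abel
    rw [hz]
    exact (Metric.ball_subset_closedBall.trans hzC)
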